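/- Mutation of 2-colored exchange matrices is an involution: if C is a skew-symmetric n×n matrix over the split-complex integers 𝕐 and k is any index, then μ_k(μ_k(C)) = C. -/

import Mathlib

/-- Positive part of a split-complex integer `z = a + bε`:
`z⁺ = max(a,0) + max(b,0)·ε`. -/
def Zsqrtd.posPart (z : Zsqrtd 1) : Zsqrtd 1 := ⟨max z.re 0, max z.im 0⟩

/-- Negative part of a split-complex integer `z = a + bε`:
`z⁻ = min(a,0) + min(b,0)·ε`. -/
def Zsqrtd.negPart (z : Zsqrtd 1) : Zsqrtd 1 := ⟨min z.re 0, min z.im 0⟩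

/-- Mutation at index `k` of a matrix over the split-complex integers `𝕐 = ℤ[ε]/(ε²−1)`:
`μ_k(C)_{ij} = −C_{ij}` if `i = k` or `j = k`, and
`μ_k(C)_{ij} = C_{ij} + C_{ik}⁺·C_{kj}⁺ − C_{ik}⁻·C_{kj}⁻` otherwise. -/
def twoColoredMutation {n : ℕ} (C : Matrix (Fin n) (Fin n) (Zsqrtd 1)) (k : Fin n) :
    Matrix (Fin n) (Fin n) (Zsqrtd 1) :=
  fun i j =>
    if i = k ∨ j = k then -C i j
    else C i j + (C i k).posPart * (C k j).posPart - (C i k).negPart * (C k j).negPart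

lemma Zsqrtd.posPart_neg (z : Zsqrtd 1) : (-z).posPart = -z.negPart := by
  simp only [Zsqrtd.posPart, Zsqrtd.negPart, Zsqrtd.ext_iff, Zsqrtd.re_neg, Zsqrtd.im_neg]
  constructor <;> omega

lemma Zsqrtd.negPart_neg (z : Zsqrtd 1) : (-z).negPart = -z.posPart := by
  simp only [Zsqrtd.posPart, Zsqrtd.negPart, Zsqrtd.ext_iff, Zsqrtd.re_neg, Zsqrtd.im_neg]
  constructor <;> omega

/-- Mutation of 2-colored exchange matrices is an involution on skew-symmetric
matrices over the split-complex integers. -/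
theorem twoColoredMutation_involutive {n : ℕ} (C : Matrix (Fin n) (Fin n) (Zsqrtd 1))
    (hC : ∀ i j, C j i = -C i j) (k : Fin n) :
    twoColoredMutation (twoColoredMutation C k) k = C := by
  funext i j
  by_cases h : i = k ∨ j = k
  · simp [twoColoredMutation, h]
  · simp only [twoColoredMutation, h, if_false, or_true, true_or, if_true,
      Zsqrtd.posPart_neg, Zsqrtd.negPart_neg, neg_mul_neg]
    ring
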